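/- Fix 0 < ε < 1/2 and a positive integer k, let B_j = [-j-ε,-j+ε], R_j = [j-ε,j+ε] for 1 ≤ j ≤ k, and let W be the set of k² intervals [-a,b] with a,b ∈ {1,…,k}. For n with 2k < n, the map sending a subset J ⊆ W of size n - 2k to the vertex-colored intersection graph of {B_1,…,B_k} ∪ {R_1,…,R_k} ∪ J (with blue, red, white colors respectively) is injective up to color-preserving isomorphism. -/

import Mathlib

def IsIntervalGraph {n : ℕ} (G : SimpleGraph (Fin n)) : Prop :=
  ∃ a b : Fin n → ℝ, (∀ i, a i ≤ b i) ∧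
    ∀ i j, i ≠ j → (G.Adj i j ↔ (Set.Icc (a i) (b i) ∩ Set.Icc (a j) (b j)).Nonempty)

def intervalIsoSetoid (n : ℕ) : Setoid {G : SimpleGraph (Fin n) // IsIntervalGraph G} where
  r G H := Nonempty (G.1 ≃g H.1)
  iseqv := ⟨fun G => ⟨SimpleGraph.Iso.refl⟩,
    fun ⟨e⟩ => ⟨e.symm⟩, fun ⟨e⟩ ⟨f⟩ => ⟨e.trans f⟩⟩

/-- The number of unlabeled interval graphs on `n` vertices. -/
noncomputable def intervalGraphCount (n : ℕ) : ℕ :=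
  Nat.card (Quotient (intervalIsoSetoid n))

/-- Vertex type: blue vertices, red vertices, and white vertices indexed by a finite
set of pairs `(a, b)` encoding the interval `[-a, b]`. -/
def ColoredVertex (k : ℕ) (J : Finset (ℕ × ℕ)) : Type :=
  Fin k ⊕ Fin k ⊕ {p : ℕ × ℕ // p ∈ J}

/-- The interval attached to each vertex (ε-neighborhoods of ±1,…,±k for blue/red,
and `[-a, b]` for white vertex `(a, b)`). -/
def vertIvl (ε : ℝ) (k : ℕ) (J : Finset (ℕ × ℕ)) : ColoredVertex k J → Set ℝ :=
  Sum.elim (fun j => Set.Icc (-((j : ℝ) + 1) - ε) (-((j : ℝ) + 1) + ε))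
    (Sum.elim (fun j => Set.Icc (((j : ℝ) + 1) - ε) (((j : ℝ) + 1) + ε))
      (fun p => Set.Icc (-(p.1.1 : ℝ)) (p.1.2 : ℝ)))

/-- The intersection graph of the intervals. -/
def intersectionGraph (ε : ℝ) (k : ℕ) (J : Finset (ℕ × ℕ)) :
    SimpleGraph (ColoredVertex k J) :=
  SimpleGraph.fromRel (fun u v => (vertIvl ε k J u ∩ vertIvl ε k J v).Nonempty)

/-- The coloring: blue = 0, red = 1, white = 2. -/
def vertColor (k : ℕ) (J : Finset (ℕ × ℕ)) : ColoredVertex k J → Fin 3 :=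
  Sum.elim (fun _ => 0) (Sum.elim (fun _ => 1) (fun _ => 2))

section Aux

lemma cardFilterLt (k a : ℕ) (ha : a ≤ k) :
    (Finset.univ.filter (fun j : Fin k => (j:ℕ) < a)).card = a := by
  rcases Nat.eq_zero_or_pos k with rfl | hk
  · interval_cases a
    simp
  · refine (Finset.card_nbij' (fun j : Fin k => (j:ℕ))
      (fun m => (⟨m % k, Nat.mod_lt _ hk⟩ : Fin k)) ?_ ?_ ?_ ?_).trans (Finset.card_range a)
    · intro j hj
      simpa using (Finset.mem_filter.1 hj).2
    · intro m hm
      have hm' := Finset.mem_range.1 hm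
      simp [Nat.mod_eq_of_lt (lt_of_lt_of_le hm' ha), hm']
    · intro j _
      exact Fin.ext (Nat.mod_eq_of_lt j.isLt)
    · intro m hm
      exact Nat.mod_eq_of_lt (lt_of_lt_of_le (Finset.mem_range.1 hm) ha)

/-- blue–white adjacency -/
lemma adjBlue (ε : ℝ) (hε0 : 0 < ε) (hε : ε < 1/2) (k : ℕ) (J : Finset (ℕ × ℕ))
    (hJ : J ⊆ Finset.Icc 1 k ×ˢ Finset.Icc 1 k) (j : Fin k) (q : {p : ℕ × ℕ // p ∈ J}) :
    (intersectionGraph ε k J).Adj (Sum.inl j) (Sum.inr (Sum.inr q)) ↔ (j:ℕ) < q.1.1 := by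
  obtain ⟨h1, h2⟩ := Finset.mem_product.1 (hJ q.2)
  obtain ⟨ha1, hak⟩ := Finset.mem_Icc.1 h1
  obtain ⟨hb1, hbk⟩ := Finset.mem_Icc.1 h2
  have key : (Set.Icc (-((j:ℝ) + 1) - ε) (-((j:ℝ) + 1) + ε) ∩
      Set.Icc (-(q.1.1:ℝ)) (q.1.2:ℝ)).Nonempty ↔ (j:ℕ) < q.1.1 := by
    rw [Set.Icc_inter_Icc, Set.nonempty_Icc, max_le_iff, le_min_iff, le_min_iff]
    have ca : (1:ℝ) ≤ (q.1.1:ℝ) := by exact_mod_cast ha1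
    have cb : (1:ℝ) ≤ (q.1.2:ℝ) := by exact_mod_cast hb1
    constructor
    · rintro ⟨⟨_, _⟩, hx, _⟩
      have : ((j:ℕ):ℝ) < (q.1.1:ℝ) := by linarith
      exact_mod_cast this
    · intro h
      have : ((j:ℕ):ℝ) + 1 ≤ (q.1.1:ℝ) := by exact_mod_cast h
      refine ⟨⟨by linarith, by linarith⟩, by linarith, by linarith⟩
  constructor
  · rintro ⟨_, h | h⟩
    · exact key.1 h
    · exact key.1 (by rwa [Set.inter_comm])
  · intro h
    exact ⟨fun hcon => Sum.inl_ne_inr hcon, Or.inl (key.2 h)⟩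

/-- red–white adjacency -/
lemma adjRed (ε : ℝ) (hε0 : 0 < ε) (hε : ε < 1/2) (k : ℕ) (J : Finset (ℕ × ℕ))
    (hJ : J ⊆ Finset.Icc 1 k ×ˢ Finset.Icc 1 k) (j : Fin k) (q : {p : ℕ × ℕ // p ∈ J}) :
    (intersectionGraph ε k J).Adj (Sum.inr (Sum.inl j)) (Sum.inr (Sum.inr q)) ↔
      (j:ℕ) < q.1.2 := by
  obtain ⟨h1, h2⟩ := Finset.mem_product.1 (hJ q.2)
  obtain ⟨ha1, hak⟩ := Finset.mem_Icc.1 h1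
  obtain ⟨hb1, hbk⟩ := Finset.mem_Icc.1 h2
  have key : (Set.Icc (((j:ℝ) + 1) - ε) (((j:ℝ) + 1) + ε) ∩
      Set.Icc (-(q.1.1:ℝ)) (q.1.2:ℝ)).Nonempty ↔ (j:ℕ) < q.1.2 := by
    rw [Set.Icc_inter_Icc, Set.nonempty_Icc, max_le_iff, le_min_iff, le_min_iff]
    have ca : (1:ℝ) ≤ (q.1.1:ℝ) := by exact_mod_cast ha1
    have cb : (1:ℝ) ≤ (q.1.2:ℝ) := by exact_mod_cast hb1
    constructor
    · rintro ⟨⟨_, hx⟩, _, _⟩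
      have : ((j:ℕ):ℝ) < (q.1.2:ℝ) := by linarith
      exact_mod_cast this
    · intro h
      have : ((j:ℕ):ℝ) + 1 ≤ (q.1.2:ℝ) := by exact_mod_cast h
      refine ⟨⟨by linarith, by linarith⟩, by linarith, by linarith⟩
  constructor
  · rintro ⟨_, h | h⟩
    · exact key.1 h
    · exact key.1 (by rwa [Set.inter_comm])
  · intro h
    refine ⟨fun hcon => ?_, Or.inl (key.2 h)⟩
    exact Sum.inl_ne_inr (Sum.inr_injective hcon)

/-- extract the `Fin k` from a blue vertex -/
def toBlue {k : ℕ} {J : Finset (ℕ × ℕ)} (hk : 0 < k) : ColoredVertex k J → Fin k :=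
  fun u => match u with
  | Sum.inl j => j
  | _ => ⟨0, hk⟩

/-- extract the `Fin k` from a red vertex -/
def toRed {k : ℕ} {J : Finset (ℕ × ℕ)} (hk : 0 < k) : ColoredVertex k J → Fin k :=
  fun u => match u with
  | Sum.inr (Sum.inl j) => j
  | _ => ⟨0, hk⟩

lemma subset_of_iso (ε : ℝ) (hε0 : 0 < ε) (hε : ε < 1/2) (k : ℕ) (hk : 0 < k)
    (J₁ J₂ : Finset (ℕ × ℕ))
    (hJ₁ : J₁ ⊆ Finset.Icc 1 k ×ˢ Finset.Icc 1 k) (hJ₂ : J₂ ⊆ Finset.Icc 1 k ×ˢ Finset.Icc 1 k)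
    (e : intersectionGraph ε k J₁ ≃g intersectionGraph ε k J₂)
    (hcol : ∀ v, vertColor k J₂ (e v) = vertColor k J₁ v) : J₁ ⊆ J₂ := by
  have hcol' : ∀ w, vertColor k J₁ (e.symm w) = vertColor k J₂ w := by
    intro w
    rw [← hcol (e.symm w)]
    congr 1
    exact e.apply_symm_apply w
  -- e maps blue to blue
  have hσ : ∀ j : Fin k, e (Sum.inl j) = Sum.inl (toBlue hk (e (Sum.inl j))) := by
    intro j
    have h := hcol (Sum.inl j)
    rcases hh : e (Sum.inl j) with m | m | m <;> rw [hh] at h <;>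
      simp [vertColor] at h <;> simp [toBlue] <;> rfl
  have hτ : ∀ j : Fin k, e.symm (Sum.inl j) = Sum.inl (toBlue hk (e.symm (Sum.inl j))) := by
    intro j
    have h := hcol' (Sum.inl j)
    rcases hh : e.symm (Sum.inl j) with m | m | m <;> rw [hh] at h <;>
      simp [vertColor] at h <;> simp [toBlue] <;> rfl
  have hσr : ∀ j : Fin k, e (Sum.inr (Sum.inl j)) =
      Sum.inr (Sum.inl (toRed hk (e (Sum.inr (Sum.inl j))))) := by
    intro j
    have h := hcol (Sum.inr (Sum.inl j))
    rcases hh : e (Sum.inr (Sum.inl j)) with m | m | m <;> rw [hh] at h <;>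
      simp [vertColor] at h <;> simp [toRed] <;> rfl
  have hτr : ∀ j : Fin k, e.symm (Sum.inr (Sum.inl j)) =
      Sum.inr (Sum.inl (toRed hk (e.symm (Sum.inr (Sum.inl j))))) := by
    intro j
    have h := hcol' (Sum.inr (Sum.inl j))
    rcases hh : e.symm (Sum.inr (Sum.inl j)) with m | m | m <;> rw [hh] at h <;>
      simp [vertColor] at h <;> simp [toRed] <;> rfl
  intro p hp
  set v : ColoredVertex k J₁ := Sum.inr (Sum.inr ⟨p, hp⟩) with hv
  obtain ⟨q, hq⟩ : ∃ q : {p : ℕ × ℕ // p ∈ J₂}, e v = Sum.inr (Sum.inr q) := by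
    have h := hcol v
    rcases hh : e v with m | m | m <;> rw [hh] at h
    · simp [vertColor, hv] at h
    · simp [vertColor, hv] at h
    · exact ⟨m, rfl⟩
  obtain ⟨hm1, hm2⟩ := Finset.mem_product.1 (hJ₁ hp)
  obtain ⟨hq1, hq2⟩ := Finset.mem_product.1 (hJ₂ q.2)
  -- first coordinates agree
  have hfst : p.1 = q.1.1 := by
    have hcard : (Finset.univ.filter (fun j : Fin k => (j:ℕ) < p.1)).card =
        (Finset.univ.filter (fun j : Fin k => (j:ℕ) < q.1.1)).card := by
      apply Finset.card_nbij' (fun j => toBlue hk (e (Sum.inl j)))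
        (fun j => toBlue hk (e.symm (Sum.inl j)))
      · intro j hj
        rw [Finset.mem_coe, Finset.mem_filter] at hj ⊢
        refine ⟨Finset.mem_univ _, ?_⟩
        have hadj : (intersectionGraph ε k J₁).Adj (Sum.inl j) v :=
          (adjBlue ε hε0 hε k J₁ hJ₁ j ⟨p, hp⟩).2 hj.2
        have := e.map_adj_iff.2 hadj
        rw [hσ j, hq] at this
        exact (adjBlue ε hε0 hε k J₂ hJ₂ _ q).1 this
      · intro j hj
        rw [Finset.mem_coe, Finset.mem_filter] at hj ⊢
        refine ⟨Finset.mem_univ _, ?_⟩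
        have hadj : (intersectionGraph ε k J₂).Adj (Sum.inl j) (Sum.inr (Sum.inr q)) :=
          (adjBlue ε hε0 hε k J₂ hJ₂ j q).2 hj.2
        rw [← hq] at hadj
        have := e.symm.map_adj_iff.2 hadj
        rw [hτ j, e.symm_apply_apply] at this
        exact (adjBlue ε hε0 hε k J₁ hJ₁ _ ⟨p, hp⟩).1 this
      · intro j _
        have h1 : e.symm (Sum.inl (toBlue hk (e (Sum.inl j)))) = Sum.inl j := by
          rw [← hσ j]; exact e.symm_apply_apply _
        dsimp only
        rw [h1]
        rfl
      · intro j _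
        have h1 : e (Sum.inl (toBlue hk (e.symm (Sum.inl j)))) = Sum.inl j := by
          rw [← hτ j]; exact e.apply_symm_apply _
        dsimp only
        rw [h1]
        rfl
    rw [cardFilterLt k p.1 (Finset.mem_Icc.1 hm1).2,
      cardFilterLt k q.1.1 (Finset.mem_Icc.1 hq1).2] at hcard
    exact hcard
  -- second coordinates agree
  have hsnd : p.2 = q.1.2 := by
    have hcard : (Finset.univ.filter (fun j : Fin k => (j:ℕ) < p.2)).card =
        (Finset.univ.filter (fun j : Fin k => (j:ℕ) < q.1.2)).card := by
      apply Finset.card_nbij' (fun j => toRed hk (e (Sum.inr (Sum.inl j))))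
        (fun j => toRed hk (e.symm (Sum.inr (Sum.inl j))))
      · intro j hj
        rw [Finset.mem_coe, Finset.mem_filter] at hj ⊢
        refine ⟨Finset.mem_univ _, ?_⟩
        have hadj : (intersectionGraph ε k J₁).Adj (Sum.inr (Sum.inl j)) v :=
          (adjRed ε hε0 hε k J₁ hJ₁ j ⟨p, hp⟩).2 hj.2
        have := e.map_adj_iff.2 hadj
        rw [hσr j, hq] at this
        exact (adjRed ε hε0 hε k J₂ hJ₂ _ q).1 this
      · intro j hj
        rw [Finset.mem_coe, Finset.mem_filter] at hj ⊢
        refine ⟨Finset.mem_univ _, ?_⟩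
        have hadj : (intersectionGraph ε k J₂).Adj (Sum.inr (Sum.inl j)) (Sum.inr (Sum.inr q)) :=
          (adjRed ε hε0 hε k J₂ hJ₂ j q).2 hj.2
        rw [← hq] at hadj
        have := e.symm.map_adj_iff.2 hadj
        rw [hτr j, e.symm_apply_apply] at this
        exact (adjRed ε hε0 hε k J₁ hJ₁ _ ⟨p, hp⟩).1 this
      · intro j _
        have h1 : e.symm (Sum.inr (Sum.inl (toRed hk (e (Sum.inr (Sum.inl j)))))) =
            Sum.inr (Sum.inl j) := by
          rw [← hσr j]; exact e.symm_apply_apply _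
        dsimp only
        rw [h1]
        rfl
      · intro j _
        have h1 : e (Sum.inr (Sum.inl (toRed hk (e.symm (Sum.inr (Sum.inl j)))))) =
            Sum.inr (Sum.inl j) := by
          rw [← hτr j]; exact e.apply_symm_apply _
        dsimp only
        rw [h1]
        rfl
    rw [cardFilterLt k p.2 (Finset.mem_Icc.1 hm2).2,
      cardFilterLt k q.1.2 (Finset.mem_Icc.1 hq2).2] at hcard
    exact hcard
  have : p = q.1 := Prod.ext hfst hsnd
  rw [this]
  exact q.2

end Aux

theorem colored_intersection_graph_injective (ε : ℝ) (hε0 : 0 < ε) (hε : ε < 1/2)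
    (k n : ℕ) (hk : 0 < k) (hn : 2 * k < n)
    (J₁ J₂ : Finset (ℕ × ℕ))
    (hJ₁ : J₁ ⊆ Finset.Icc 1 k ×ˢ Finset.Icc 1 k) (hJ₂ : J₂ ⊆ Finset.Icc 1 k ×ˢ Finset.Icc 1 k)
    (hc₁ : J₁.card = n - 2 * k) (hc₂ : J₂.card = n - 2 * k)
    (hiso : ∃ e : intersectionGraph ε k J₁ ≃g intersectionGraph ε k J₂,
      ∀ v, vertColor k J₂ (e v) = vertColor k J₁ v) :
    J₁ = J₂ := by
  obtain ⟨e, hcol⟩ := hiso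
  have hcol' : ∀ w, vertColor k J₁ (e.symm w) = vertColor k J₂ w := by
    intro w
    rw [← hcol (e.symm w)]
    congr 1
    exact e.apply_symm_apply w
  exact Finset.Subset.antisymm
    (subset_of_iso ε hε0 hε k hk J₁ J₂ hJ₁ hJ₂ e hcol)
    (subset_of_iso ε hε0 hε k hk J₂ J₁ hJ₂ hJ₁ e.symm hcol')
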